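/- Let ρ = (ρ₁,…,ρ_q) be a real vector with |ρᵢ| < 1 for all i, and let V be a real symmetric positive definite q×q matrix. Define the q×q matrix S by S_{ij} = V_{ij} / (1 − ρᵢ ρ_j). Then S is symmetric positive definite, and S − diag(ρ) S diag(ρ) = V (equivalently, V equals the Hadamard product (1·1ᵀ − ρ ρᵀ) ∘ S). -/

import Mathlib

open Matrix

lemma iwar_aux_abs {q : ℕ} (ρ : Fin q → ℝ) (hρ : ∀ i, |ρ i| < 1) (i j : Fin q) :
    |ρ i * ρ j| < 1 := by
  rw [abs_mul]
  calc |ρ i| * |ρ j| ≤ |ρ i| * 1 :=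
        mul_le_mul_of_nonneg_left (hρ j).le (abs_nonneg _)
    _ = |ρ i| := mul_one _
    _ < 1 := hρ i

/-- Non-reversible diagonal-F parameterization: given |ρᵢ| < 1 and V symmetric positive
definite, the matrix S with entries S_{ij} = V_{ij}/(1 − ρᵢρⱼ) is positive definite and
satisfies S − diag(ρ) S diag(ρ) = V. -/
theorem iwar_diagonalF_marginal_scale {q : ℕ} (ρ : Fin q → ℝ) (hρ : ∀ i, |ρ i| < 1)
    (V : Matrix (Fin q) (Fin q) ℝ) (hV : V.PosDef)
    (S : Matrix (Fin q) (Fin q) ℝ)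
    (hS : ∀ i j, S i j = V i j / (1 - ρ i * ρ j)) :
    S.PosDef ∧ S - Matrix.diagonal ρ * S * Matrix.diagonal ρ = V := by
  have habs : ∀ i j, |ρ i * ρ j| < 1 := iwar_aux_abs ρ hρ
  have hnorm : ∀ i j : Fin q, ‖ρ i * ρ j‖ < 1 := by
    intro i j; rw [Real.norm_eq_abs]; exact habs i j
  have hne : ∀ i j : Fin q, 1 - ρ i * ρ j ≠ 0 := fun i j =>
    sub_ne_zero.mpr (ne_of_gt (abs_lt.mp (habs i j)).2)
  constructor
  · rw [posDef_iff_dotProduct_mulVec]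
    constructor
    · -- Hermitian
      ext i j
      simp only [conjTranspose_apply, star_trivial, hS]
      rw [show V j i = V i j from by
        have h1 : Vᴴ = V := hV.1
        have := congrFun (congrFun h1 i) j
        simpa [conjTranspose_apply] using this]
      ring_nf
    · intro x hx
      have hsumij : ∀ i j : Fin q,
          Summable fun n : ℕ => (x i * ρ i ^ n) * V i j * (x j * ρ j ^ n) := by
        intro i j
        have hs : Summable fun n : ℕ => (ρ i * ρ j) ^ n :=
          summable_geometric_of_norm_lt_one (hnorm i j)
        refine (hs.mul_left (x i * V i j * x j)).congr fun n => ?_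
        rw [mul_pow]; ring
      have key : star x ⬝ᵥ S *ᵥ x
          = ∑' n : ℕ, ∑ i, ∑ j, (x i * ρ i ^ n) * V i j * (x j * ρ j ^ n) := by
        rw [Summable.tsum_finsetSum (fun i _ => summable_sum fun j _ => hsumij i j)]
        simp only [dotProduct, mulVec, dotProduct, star_trivial]
        refine Finset.sum_congr rfl fun i _ => ?_
        rw [Finset.mul_sum, Summable.tsum_finsetSum (fun j _ => hsumij i j)]
        refine Finset.sum_congr rfl fun j _ => ?_
        have hgeo : ∑' n : ℕ, (ρ i * ρ j) ^ n = (1 - ρ i * ρ j)⁻¹ :=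
          tsum_geometric_of_norm_lt_one (hnorm i j)
        have heq : ∑' n : ℕ, (x i * ρ i ^ n) * V i j * (x j * ρ j ^ n)
            = (x i * V i j * x j) * ∑' n : ℕ, (ρ i * ρ j) ^ n := by
          rw [← tsum_mul_left]
          refine tsum_congr fun n => ?_
          rw [mul_pow]; ring
        rw [heq, hgeo, hS]
        field_simp
      rw [key]
      set g : ℕ → ℝ := fun n => ∑ i, ∑ j, (x i * ρ i ^ n) * V i j * (x j * ρ j ^ n) with hg
      have hgdot : ∀ n, g n =
          star (fun i => x i * ρ i ^ n) ⬝ᵥ V *ᵥ (fun i => x i * ρ i ^ n) := by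
        intro n
        simp only [hg, dotProduct, mulVec, dotProduct, star_trivial, Finset.mul_sum]
        exact Finset.sum_congr rfl fun i _ => Finset.sum_congr rfl fun j _ => by ring
      have hgn : ∀ n, 0 ≤ g n := fun n => by
        rw [hgdot n]; exact hV.posSemidef.dotProduct_mulVec_nonneg _
      have hsum : Summable g :=
        summable_sum fun i _ => summable_sum fun j _ => hsumij i j
      have h0 : 0 < g 0 := by
        rw [hgdot 0]
        have hx0 : (fun i => x i * ρ i ^ 0) ≠ 0 := by
          simpa using hx
        simpa using hV.dotProduct_mulVec_pos hx0
      calc 0 < g 0 := h0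
        _ ≤ ∑' n, g n := Summable.le_tsum hsum 0 fun n _ => hgn n
  · ext i j
    rw [Matrix.sub_apply, mul_diagonal, diagonal_mul, hS]
    field_simp [hne i j]
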